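/- With g_n, h_n as in the recursion above over ℚ, the resultant Res(g_n, h_n) is, up to sign, a power of 2 for every n ≥ 1. -/

import Mathlib

open Polynomial

/-- The numerators and denominators of the iterates of `f(x) = 1/(x-1)²`:
`gh n = (gₙ, hₙ)` with `g₁ = 1`, `h₁ = (x-1)²`, `gₙ = hₙ₋₁²`, `hₙ = (gₙ₋₁ - hₙ₋₁)²`. -/
noncomputable def gh : ℕ → Polynomial ℚ × Polynomial ℚ
  | 0 => (1, 1)
  | 1 => (1, (X - 1) ^ 2)
  | n + 2 => ((gh (n + 1)).2 ^ 2, ((gh (n + 1)).1 - (gh (n + 1)).2) ^ 2)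

/-- `gₙ`, the numerator of `fⁿ`. -/
noncomputable def g (n : ℕ) : Polynomial ℚ := (gh n).1

/-- `hₙ`, the denominator of `fⁿ`. -/
noncomputable def h (n : ℕ) : Polynomial ℚ := (gh n).2

/-- The Sylvester matrix of two polynomials. -/
noncomputable def sylvester {F : Type*} [Field F] (p q : Polynomial F) :
    Matrix (Fin (q.natDegree + p.natDegree)) (Fin (q.natDegree + p.natDegree)) F :=
  fun i j =>
    if (i : ℕ) < q.natDegree then
      (if (i : ℕ) ≤ (j : ℕ) then p.coeff ((j : ℕ) - (i : ℕ)) else 0)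
    else
      (if (i : ℕ) - q.natDegree ≤ (j : ℕ) then q.coeff ((j : ℕ) - ((i : ℕ) - q.natDegree)) else 0)

/-- The resultant of two polynomials, as the determinant of their Sylvester matrix. -/
noncomputable def res {F : Type*} [Field F] (p q : Polynomial F) : F :=
  (_root_.sylvester p q).det

/-! ### Integer versions of `gₙ`, `hₙ` -/

/-- Integer version of `gh`. -/
noncomputable def ghZ : ℕ → Polynomial ℤ × Polynomial ℤ
  | 0 => (1, 1)
  | 1 => (1, (X - 1) ^ 2)
  | n + 2 => ((ghZ (n + 1)).2 ^ 2, ((ghZ (n + 1)).1 - (ghZ (n + 1)).2) ^ 2)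

noncomputable def gz (n : ℕ) : Polynomial ℤ := (ghZ n).1
noncomputable def hz (n : ℕ) : Polynomial ℤ := (ghZ n).2

lemma gz_add_two (n : ℕ) : gz (n + 2) = hz (n + 1) ^ 2 := rfl
lemma hz_add_two (n : ℕ) : hz (n + 2) = (gz (n + 1) - hz (n + 1)) ^ 2 := rfl

lemma map_ghZ : ∀ n : ℕ, g n = (gz n).map (Int.castRingHom ℚ) ∧
    h n = (hz n).map (Int.castRingHom ℚ)
  | 0 => by simp [g, h, gz, hz, gh, ghZ]
  | 1 => by simp [g, h, gz, hz, gh, ghZ]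
  | n + 2 => by
    obtain ⟨h1, h2⟩ := map_ghZ (n + 1)
    constructor
    · show (gh (n+2)).1 = _
      rw [show gh (n+2) = ((gh (n + 1)).2 ^ 2, ((gh (n + 1)).1 - (gh (n + 1)).2) ^ 2) from rfl]
      rw [gz_add_two]
      simp only [Polynomial.map_pow]
      rw [← h2]; rfl
    · show (gh (n+2)).2 = _
      rw [show gh (n+2) = ((gh (n + 1)).2 ^ 2, ((gh (n + 1)).1 - (gh (n + 1)).2) ^ 2) from rfl]
      rw [hz_add_two]
      simp only [Polynomial.map_pow, Polynomial.map_sub]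
      rw [← h2, ← h1]; rfl

/-- The Bezout identity `A gₙ + B hₙ = 1` over `ℤ`, by induction using the cube trick. -/
lemma bez : ∀ n : ℕ, ∃ A B : Polynomial ℤ, A * gz n + B * hz n = 1
  | 0 => ⟨1, 0, by simp [gz, hz, ghZ]⟩
  | 1 => ⟨1, 0, by simp [gz, hz, ghZ]⟩
  | n + 2 => by
    obtain ⟨A, B, hAB⟩ := bez (n + 1)
    set G := gz (n + 1)
    set H := hz (n + 1)
    refine ⟨3 * A * (A + B) ^ 2 * (G - H) + (A + B) ^ 3 * H,
            A ^ 3 * (G - H) + 3 * A ^ 2 * (A + B) * H, ?_⟩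
    rw [gz_add_two, hz_add_two]
    have key : (3 * A * (A + B) ^ 2 * (G - H) + (A + B) ^ 3 * H) * H ^ 2 +
        (A ^ 3 * (G - H) + 3 * A ^ 2 * (A + B) * H) * (G - H) ^ 2 =
        (A * G + B * H) ^ 3 := by ring
    rw [key, hAB, one_pow]

/-! ### Leading coefficient invariant -/

def St1 (p q : Polynomial ℤ) : Prop :=
  p ≠ 0 ∧ q.leadingCoeff = 1 ∧ p.natDegree < q.natDegree ∧ 0 < q.natDegree

def St2 (p q : Polynomial ℤ) : Prop :=
  p.leadingCoeff = 1 ∧ q.leadingCoeff = 1 ∧ p.natDegree = q.natDegree ∧ 0 < q.natDegree ∧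
    p - q ≠ 0 ∧ (p - q).natDegree < q.natDegree

def St0 (p q : Polynomial ℤ) : Prop :=
  p.leadingCoeff = 1 ∧ q ≠ 0 ∧ q.natDegree < p.natDegree

lemma sub_facts {p q : Polynomial ℤ} (hq : q ≠ 0) (hlt : p.natDegree < q.natDegree) :
    (p - q).leadingCoeff = -q.leadingCoeff ∧ (p - q).natDegree = q.natDegree := by
  have hdeg : p.degree < (-q).degree := by
    rw [degree_neg]; exact degree_lt_degree hlt
  have e : p - q = p + (-q) := by ring
  constructor
  · rw [e, leadingCoeff_add_of_degree_lt hdeg, leadingCoeff_neg]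
  · rw [e, natDegree_eq_of_degree_eq (degree_add_eq_right_of_degree_lt hdeg), natDegree_neg]

lemma step12 {p q : Polynomial ℤ} (s : St1 p q) : St2 (q ^ 2) ((p - q) ^ 2) := by
  obtain ⟨hp0, hlcq, hlt, hpos⟩ := s
  have hq0 : q ≠ 0 := leadingCoeff_ne_zero.mp (by rw [hlcq]; norm_num)
  obtain ⟨lcd, ndd⟩ := sub_facts hq0 hlt
  have hd0 : p - q ≠ 0 := leadingCoeff_ne_zero.mp (by rw [lcd, hlcq]; norm_num)
  -- e = 2q - p
  set e : Polynomial ℤ := C 2 * q - p with he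
  have hC2 : (C (2:ℤ) * q) ≠ 0 := mul_ne_zero (by simp) hq0
  have hdegC2 : (C (2:ℤ) * q).natDegree = q.natDegree := by
    rw [natDegree_mul (by simp) hq0, natDegree_C]; ring
  obtain ⟨lce, nde⟩ := sub_facts (p := p) (q := C 2 * q) hC2 (by rw [hdegC2]; exact hlt)
  have hneg : e = -(p - C 2 * q) := by rw [he]; ring
  have lce' : e.leadingCoeff = 2 := by
    rw [hneg, leadingCoeff_neg, lce, neg_neg, leadingCoeff_mul, leadingCoeff_C, hlcq]; ring
  have nde' : e.natDegree = q.natDegree := by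
    rw [hneg, natDegree_neg, nde, hdegC2]
  have he0 : e ≠ 0 := leadingCoeff_ne_zero.mp (by rw [lce']; norm_num)
  have hfact : q ^ 2 - (p - q) ^ 2 = p * e := by
    rw [he, map_ofNat (C : ℤ →+* Polynomial ℤ) 2]; ring
  refine ⟨?_, ?_, ?_, ?_, ?_, ?_⟩
  · rw [leadingCoeff_pow, hlcq]; norm_num
  · rw [leadingCoeff_pow, lcd, hlcq]; norm_num
  · rw [natDegree_pow, natDegree_pow, ndd]
  · rw [natDegree_pow, ndd]; omega
  · rw [hfact]; exact mul_ne_zero hp0 he0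
  · rw [hfact, natDegree_mul hp0 he0, nde', natDegree_pow, ndd]; omega

lemma step20 {p q : Polynomial ℤ} (s : St2 p q) : St0 (q ^ 2) ((p - q) ^ 2) := by
  obtain ⟨hlcp, hlcq, hnd, hpos, hd0, hdlt⟩ := s
  refine ⟨?_, pow_ne_zero _ hd0, ?_⟩
  · rw [leadingCoeff_pow, hlcq]; norm_num
  · rw [natDegree_pow, natDegree_pow]; omega

lemma step01 {p q : Polynomial ℤ} (s : St0 p q) : St1 (q ^ 2) ((p - q) ^ 2) := by
  obtain ⟨hlcp, hq0, hlt⟩ := s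
  have hp0 : p ≠ 0 := leadingCoeff_ne_zero.mp (by rw [hlcp]; norm_num)
  -- p - q = -(q - p) has leading coeff = lc p = 1
  have hqp := sub_facts hp0 hlt
  have lcd : (p - q).leadingCoeff = 1 := by
    have e : p - q = -(q - p) := by ring
    rw [e, leadingCoeff_neg, hqp.1, hlcp]; ring
  have ndd : (p - q).natDegree = p.natDegree := by
    have e : p - q = -(q - p) := by ring
    rw [e, natDegree_neg, hqp.2]
  refine ⟨pow_ne_zero _ hq0, ?_, ?_, ?_⟩
  · rw [leadingCoeff_pow, lcd]; norm_num
  · rw [natDegree_pow, natDegree_pow, ndd]; omega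
  · rw [natDegree_pow, ndd]; omega

lemma base1 : St1 (gz 1) (hz 1) := by
  have hgz : gz 1 = 1 := rfl
  have hhz : hz 1 = (X - 1) ^ 2 := rfl
  have hm : ((X : Polynomial ℤ) - 1).Monic := by
    simpa using monic_X_sub_C (1 : ℤ)
  have hnd : ((X : Polynomial ℤ) - 1).natDegree = 1 := by
    simpa using natDegree_X_sub_C (1 : ℤ)
  refine ⟨by simp [hgz], ?_, ?_, ?_⟩
  · rw [hhz, leadingCoeff_pow, hm.leadingCoeff]; norm_num
  · rw [hgz, hhz, natDegree_pow, hnd]; simp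
  · rw [hhz, natDegree_pow, hnd]; omega

lemma states (k : ℕ) : St1 (gz (3*k+1)) (hz (3*k+1)) ∧ St2 (gz (3*k+2)) (hz (3*k+2)) ∧
    St0 (gz (3*k+3)) (hz (3*k+3)) := by
  induction k with
  | zero =>
    refine ⟨base1, ?_, ?_⟩
    · have := step12 base1
      rwa [← gz_add_two 0, ← hz_add_two 0] at this
    · have := step20 (by
        have := step12 base1
        rwa [← gz_add_two 0, ← hz_add_two 0] at this)
      rwa [← gz_add_two 1, ← hz_add_two 1] at this
  | succ k ih =>
    have s1 : St1 (gz (3*k+2+2)) (hz (3*k+2+2)) := by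
      rw [gz_add_two, hz_add_two]
      exact step01 ih.2.2
    have s2 : St2 (gz (3*k+3+2)) (hz (3*k+3+2)) := by
      rw [gz_add_two, hz_add_two]
      exact step12 s1
    have s0 : St0 (gz (3*k+4+2)) (hz (3*k+4+2)) := by
      rw [gz_add_two, hz_add_two]
      exact step20 s2
    refine ⟨?_, ?_, ?_⟩
    · rw [show 3*(k+1)+1 = 3*k+2+2 from by ring]; exact s1
    · rw [show 3*(k+1)+2 = 3*k+3+2 from by ring]; exact s2
    · rw [show 3*(k+1)+3 = 3*k+4+2 from by ring]; exact s0

lemma lc_facts {n : ℕ} (hn : 1 ≤ n) :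
    gz n ≠ 0 ∧ hz n ≠ 0 ∧ ((gz n).leadingCoeff = 1 ∨ (hz n).leadingCoeff = 1) := by
  have hcase : n = 3*((n-1)/3)+1 ∨ n = 3*((n-1)/3)+2 ∨ n = 3*((n-1)/3)+3 := by omega
  set k := (n-1)/3
  obtain ⟨s1, s2, s0⟩ := states k
  rcases hcase with e | e | e <;> rw [e]
  · exact ⟨s1.1, leadingCoeff_ne_zero.mp (by rw [s1.2.1]; norm_num), Or.inr s1.2.1⟩
  · exact ⟨leadingCoeff_ne_zero.mp (by rw [s2.1]; norm_num),
      leadingCoeff_ne_zero.mp (by rw [s2.2.1]; norm_num), Or.inl s2.1⟩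
  · exact ⟨leadingCoeff_ne_zero.mp (by rw [s0.1]; norm_num), s0.2.1, Or.inl s0.1⟩

/-! ### Generic Sylvester-type matrix -/

/-- Sylvester-type matrix with explicit dimension parameters. -/
def sylMat {R : Type*} [Semiring R] (p q : Polynomial R) (m n : ℕ) :
    Matrix (Fin (n + m)) (Fin (n + m)) R :=
  fun i j =>
    if (i : ℕ) < n then
      (if (i : ℕ) ≤ (j : ℕ) then p.coeff ((j : ℕ) - (i : ℕ)) else 0)
    else
      (if (i : ℕ) - n ≤ (j : ℕ) then q.coeff ((j : ℕ) - ((i : ℕ) - n)) else 0)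

lemma sylvester_eq_sylMat {F : Type*} [Field F] (p q : Polynomial F) :
    _root_.sylvester p q = sylMat p q p.natDegree q.natDegree := rfl

lemma sylMat_map {R S : Type*} [CommRing R] [CommRing S] (φ : R →+* S)
    (p q : Polynomial R) (m n : ℕ) :
    (φ.mapMatrix (sylMat p q m n)) = sylMat (p.map φ) (q.map φ) m n := by
  ext i j
  simp only [RingHom.mapMatrix_apply, Matrix.map_apply, sylMat, apply_ite φ, map_zero,
    Polynomial.coeff_map]

/-- The Sylvester-type matrix of coprime polynomials, one of which has full degree,
is nonsingular. -/
lemma sylMat_det_ne_zero {K : Type*} [Field K] (gk hk : Polynomial K) (m n : ℕ)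
    (hgm : gk.natDegree ≤ m) (hhn : hk.natDegree ≤ n)
    (hfull : (gk ≠ 0 ∧ gk.natDegree = m) ∨ (hk ≠ 0 ∧ hk.natDegree = n))
    (hcop : IsCoprime gk hk) : (sylMat gk hk m n).det ≠ 0 := by
  intro hdet
  obtain ⟨v, hvne, hv⟩ := Matrix.exists_vecMul_eq_zero_iff.mpr hdet
  set a : Polynomial K := ∑ i : Fin (n + m),
    if (i : ℕ) < n then C (v i) * X ^ (i : ℕ) else 0 with ha
  set b : Polynomial K := ∑ i : Fin (n + m),
    if (i : ℕ) < n then 0 else C (v i) * X ^ ((i : ℕ) - n) with hb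
  have habk : a * gk + b * hk = 0 := by
    apply Polynomial.ext
    intro j
    rw [coeff_zero, coeff_add, ha, hb, Finset.sum_mul, Finset.sum_mul,
      finset_sum_coeff, finset_sum_coeff, ← Finset.sum_add_distrib]
    by_cases hj : j < n + m
    · have hrow := congrFun hv ⟨j, hj⟩
      simp only [Matrix.vecMul, dotProduct, Pi.zero_apply] at hrow
      rw [← hrow]
      apply Finset.sum_congr rfl
      intro i _
      simp only [sylMat]
      by_cases hin : (i : ℕ) < n
      · rw [if_pos hin, if_pos hin, if_pos hin, zero_mul, coeff_zero, add_zero]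
        have e : C (v i) * X ^ (i : ℕ) * gk = C (v i) * (gk * X ^ (i : ℕ)) := by ring
        rw [e, coeff_C_mul, coeff_mul_X_pow']
      · rw [if_neg hin, if_neg hin, if_neg hin, zero_mul, coeff_zero, zero_add]
        have e : C (v i) * X ^ ((i : ℕ) - n) * hk = C (v i) * (hk * X ^ ((i : ℕ) - n)) := by
          ring
        rw [e, coeff_C_mul, coeff_mul_X_pow']
    · apply Finset.sum_eq_zero
      intro i _
      by_cases hin : (i : ℕ) < n
      · rw [if_pos hin, if_pos hin, zero_mul, coeff_zero, add_zero]
        have e : C (v i) * X ^ (i : ℕ) * gk = C (v i) * (gk * X ^ (i : ℕ)) := by ring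
        rw [e, coeff_C_mul, coeff_mul_X_pow']
        have : gk.coeff (j - (i : ℕ)) = 0 :=
          coeff_eq_zero_of_natDegree_lt (lt_of_le_of_lt hgm (by omega))
        split_ifs <;> simp [this]
      · rw [if_neg hin, if_neg hin, zero_mul, coeff_zero, zero_add]
        have e : C (v i) * X ^ ((i : ℕ) - n) * hk = C (v i) * (hk * X ^ ((i : ℕ) - n)) := by
          ring
        rw [e, coeff_C_mul, coeff_mul_X_pow']
        have hi2 : (i : ℕ) < n + m := i.isLt
        have : hk.coeff (j - ((i : ℕ) - n)) = 0 :=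
          coeff_eq_zero_of_natDegree_lt (lt_of_le_of_lt hhn (by omega))
        split_ifs <;> simp [this]
  have hadeg : a.degree < (n : WithBot ℕ) := by
    apply lt_of_le_of_lt (degree_sum_le _ _)
    rw [Finset.sup_lt_iff (show (⊥ : WithBot ℕ) < (n : ℕ) by simp [bot_lt_iff_ne_bot])]
    intro i _
    split_ifs with hin
    · exact lt_of_le_of_lt (degree_C_mul_X_pow_le _ _) (by exact_mod_cast hin)
    · simp [bot_lt_iff_ne_bot]
  have hbdeg : b.degree < (m : WithBot ℕ) := by
    apply lt_of_le_of_lt (degree_sum_le _ _)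
    rw [Finset.sup_lt_iff (show (⊥ : WithBot ℕ) < (m : ℕ) by simp [bot_lt_iff_ne_bot])]
    intro i _
    split_ifs with hin
    · simp [bot_lt_iff_ne_bot]
    · refine lt_of_le_of_lt (degree_C_mul_X_pow_le _ _) ?_
      have hi2 : (i : ℕ) < n + m := i.isLt
      exact_mod_cast (by omega : (i : ℕ) - n < m)
  have hab0 : a = 0 ∧ b = 0 := by
    rcases hfull with ⟨hg0, hgdeg⟩ | ⟨hh0, hhdeg⟩
    · have hdvd : gk ∣ b := by
        apply hcop.dvd_of_dvd_mul_right
        exact ⟨-a, by linear_combination habk⟩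
      have hb0 : b = 0 := by
        by_contra hb0
        have h1 := degree_le_of_dvd hdvd hb0
        rw [degree_eq_natDegree hg0, hgdeg] at h1
        exact absurd (lt_of_le_of_lt h1 hbdeg) (lt_irrefl _)
      have ha0 : a = 0 := by
        have : a * gk = 0 := by rw [hb0] at habk; simpa using habk
        rcases mul_eq_zero.mp this with h' | h'
        · exact h'
        · exact absurd h' hg0
      exact ⟨ha0, hb0⟩
    · have hdvd : hk ∣ a := by
        apply hcop.symm.dvd_of_dvd_mul_right
        exact ⟨-b, by linear_combination habk⟩
      have ha0 : a = 0 := by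
        by_contra ha0
        have h1 := degree_le_of_dvd hdvd ha0
        rw [degree_eq_natDegree hh0, hhdeg] at h1
        exact absurd (lt_of_le_of_lt h1 hadeg) (lt_irrefl _)
      have hb0 : b = 0 := by
        have : b * hk = 0 := by rw [ha0] at habk; simpa using habk
        rcases mul_eq_zero.mp this with h' | h'
        · exact h'
        · exact absurd h' hh0
      exact ⟨ha0, hb0⟩
  apply hvne
  funext i
  by_cases hin : (i : ℕ) < n
  · have : a.coeff (i : ℕ) = v i := by
      rw [ha, finset_sum_coeff, Finset.sum_eq_single i]
      · rw [if_pos hin, coeff_C_mul, coeff_X_pow, if_pos rfl, mul_one]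
      · intro i' _ hne
        split_ifs with h'
        · rw [coeff_C_mul, coeff_X_pow, if_neg, mul_zero]
          intro hcontra
          exact hne (Fin.ext hcontra.symm)
        · exact coeff_zero _
      · intro hcontra
        exact absurd (Finset.mem_univ i) hcontra
    rw [← this, hab0.1, coeff_zero]; rfl
  · have : b.coeff ((i : ℕ) - n) = v i := by
      rw [hb, finset_sum_coeff, Finset.sum_eq_single i]
      · rw [if_neg hin, coeff_C_mul, coeff_X_pow, if_pos rfl, mul_one]
      · intro i' _ hne
        split_ifs with h'
        · exact coeff_zero _
        · rw [coeff_C_mul, coeff_X_pow, if_neg, mul_zero]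
          intro hcontra
          apply hne
          apply Fin.ext
          omega
      · intro hcontra
        exact absurd (Finset.mem_univ i) hcontra
    rw [← this, hab0.2, coeff_zero]; rfl

/-! ### Arithmetic conclusion -/

lemma int_pm_one {d : ℤ} (h0 : d ≠ 0) (hp : ∀ p : ℕ, p.Prime → ¬ (p : ℤ) ∣ d) :
    d = 1 ∨ d = -1 := by
  have habs : d.natAbs = 1 := by
    by_contra hne
    obtain ⟨p, hprime, hdvd⟩ := Nat.exists_prime_and_dvd hne
    apply hp p hprime
    rw [← Int.natAbs_dvd_natAbs]
    simpa using hdvd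
  rcases Int.natAbs_eq d with h1 | h1
  · left; rw [h1, habs]; rfl
  · right; rw [h1, habs]; rfl

/-- For every `n ≥ 1`, the resultant `Res(gₙ, hₙ)` is, up to sign,
a power of `2`. -/
theorem resultant_pow_two (n : ℕ) (hn : 1 ≤ n) :
    ∃ m : ℕ, res (g n) (h n) = 2 ^ m ∨ res (g n) (h n) = -(2 ^ m) := by
  obtain ⟨hgQ, hhQ⟩ := map_ghZ n
  obtain ⟨hgz0, hhz0, hlc⟩ := lc_facts hn
  obtain ⟨A, B, hAB⟩ := bez n
  have hinj : Function.Injective (⇑(Int.castRingHom ℚ)) := fun x y => by simp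
  set mQ := (g n).natDegree with hmQ
  set nQ := (h n).natDegree with hnQ
  have hmz : (gz n).natDegree = mQ := by
    rw [hmQ, hgQ, natDegree_map_eq_of_injective hinj]
  have hnz : (hz n).natDegree = nQ := by
    rw [hnQ, hhQ, natDegree_map_eq_of_injective hinj]
  set d : ℤ := (sylMat (gz n) (hz n) mQ nQ).det with hd
  have hmm : sylMat (g n) (h n) mQ nQ =
      (Int.castRingHom ℚ).mapMatrix (sylMat (gz n) (hz n) mQ nQ) := by
    rw [sylMat_map, ← hgQ, ← hhQ]
  -- res equals the image of d
  have hres : res (g n) (h n) = (d : ℚ) := by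
    rw [res, sylvester_eq_sylMat, ← hmQ, ← hnQ, hmm, ← RingHom.map_det]
    simp [hd]
  -- d is nonzero
  have hd0 : d ≠ 0 := by
    intro h0
    have hzero : (sylMat (g n) (h n) mQ nQ).det = 0 := by
      rw [hmm, ← RingHom.map_det, ← hd, h0]
      simp
    refine sylMat_det_ne_zero (g n) (h n) mQ nQ le_rfl le_rfl ?_ ?_ hzero
    · refine Or.inl ⟨?_, rfl⟩
      rw [hgQ]
      exact (Polynomial.map_ne_zero_iff hinj).mpr hgz0
    · refine ⟨A.map (Int.castRingHom ℚ), B.map (Int.castRingHom ℚ), ?_⟩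
      rw [hgQ, hhQ, ← Polynomial.map_mul, ← Polynomial.map_mul, ← Polynomial.map_add, hAB,
        Polynomial.map_one]
  -- no prime divides d
  have hnop : ∀ p : ℕ, p.Prime → ¬ (p : ℤ) ∣ d := by
    intro p hprime hdvd
    haveI : Fact p.Prime := ⟨hprime⟩
    set φ : ℤ →+* ZMod p := Int.castRingHom (ZMod p)
    have hdet0 : (sylMat ((gz n).map φ) ((hz n).map φ) mQ nQ).det = 0 := by
      rw [← sylMat_map φ (gz n) (hz n) mQ nQ, ← RingHom.map_det, ← hd]
      show ((d : ℤ) : ZMod p) = 0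
      exact (ZMod.intCast_zmod_eq_zero_iff_dvd d p).mpr (by exact_mod_cast hdvd)
    refine sylMat_det_ne_zero ((gz n).map φ) ((hz n).map φ) mQ nQ ?_ ?_ ?_ ?_ hdet0
    · rw [← hmz]; exact natDegree_map_le
    · rw [← hnz]; exact natDegree_map_le
    · rcases hlc with hlcg | hlch
      · refine Or.inl ⟨?_, ?_⟩
        · apply leadingCoeff_ne_zero.mp
          rw [← coeff_natDegree]
          have hdeq : ((gz n).map φ).degree = (gz n).degree :=
            degree_map_eq_of_leadingCoeff_ne_zero φ (by rw [hlcg]; simp)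
          rw [natDegree_eq_of_degree_eq hdeq, coeff_map, coeff_natDegree, hlcg]
          simp
        · have hdeq : ((gz n).map φ).degree = (gz n).degree :=
            degree_map_eq_of_leadingCoeff_ne_zero φ (by rw [hlcg]; simp)
          rw [natDegree_eq_of_degree_eq hdeq, hmz]
      · refine Or.inr ⟨?_, ?_⟩
        · apply leadingCoeff_ne_zero.mp
          rw [← coeff_natDegree]
          have hdeq : ((hz n).map φ).degree = (hz n).degree :=
            degree_map_eq_of_leadingCoeff_ne_zero φ (by rw [hlch]; simp)
          rw [natDegree_eq_of_degree_eq hdeq, coeff_map, coeff_natDegree, hlch]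
          simp
        · have hdeq : ((hz n).map φ).degree = (hz n).degree :=
            degree_map_eq_of_leadingCoeff_ne_zero φ (by rw [hlch]; simp)
          rw [natDegree_eq_of_degree_eq hdeq, hnz]
    · refine ⟨A.map φ, B.map φ, ?_⟩
      rw [← Polynomial.map_mul, ← Polynomial.map_mul, ← Polynomial.map_add, hAB,
        Polynomial.map_one]
  rcases int_pm_one hd0 hnop with h1 | h1
  · exact ⟨0, Or.inl (by rw [hres, h1]; norm_num)⟩
  · exact ⟨0, Or.inr (by rw [hres, h1]; norm_num)⟩
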